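/- In the bugs model with broadcast control U_c ∈ ℝ², when both agents i and i+1 detect U_c (so ṗ_j = (p_{j+1}−p_j)/d_j + U_c for j = i, i+1), the derivative of the inter-agent distance satisfies ḋ_i = cos θ − 1 ≤ 0 for any U_c, where θ is the angle between ṗ_i − U_c and ṗ_{i+1} − U_c. -/

import Mathlib

/-- Bugs model with broadcast control: when both agents `i` and `i+1` detect `U_c`,
`ḋ_i = (1/d_i)⟨ṗ_{i+1}−ṗ_i, p_{i+1}−p_i⟩ = cos θ − 1 ≤ 0` for any `U_c`,
where `θ` is the angle between `ṗ_i − U_c` and `ṗ_{i+1} − U_c`. -/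
theorem bugs_both_detect_distance_nonincreasing
    (p0 p1 p2 : EuclideanSpace ℝ (Fin 2)) (Uc : EuclideanSpace ℝ (Fin 2))
    (d0 d1 : ℝ) (hd0 : d0 = ‖p1 - p0‖) (hd1 : d1 = ‖p2 - p1‖)
    (hd0pos : 0 < d0) (hd1pos : 0 < d1)
    (pdot0 pdot1 : EuclideanSpace ℝ (Fin 2))
    (hpdot0 : pdot0 = (d0)⁻¹ • (p1 - p0) + Uc)
    (hpdot1 : pdot1 = (d1)⁻¹ • (p2 - p1) + Uc)
    (ddot : ℝ) (hddot : ddot = (d0)⁻¹ * (inner ℝ (pdot1 - pdot0) (p1 - p0) : ℝ)) :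
    ddot = (inner ℝ (pdot1 - Uc) (pdot0 - Uc) : ℝ) - 1 ∧ ddot ≤ 0 := by
  have h0ne : d0 ≠ 0 := ne_of_gt hd0pos
  have hu0 : pdot0 - Uc = (d0)⁻¹ • (p1 - p0) := by rw [hpdot0]; abel
  have hu1 : pdot1 - Uc = (d1)⁻¹ • (p2 - p1) := by rw [hpdot1]; abel
  have hdiff : pdot1 - pdot0 = (pdot1 - Uc) - (pdot0 - Uc) := by abel
  have hn0 : ‖pdot0 - Uc‖ = 1 := by
    rw [hu0, norm_smul, norm_inv, Real.norm_eq_abs, abs_of_pos hd0pos, ← hd0,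
      inv_mul_cancel₀ h0ne]
  have hn1 : ‖pdot1 - Uc‖ = 1 := by
    rw [hu1, norm_smul, norm_inv, Real.norm_eq_abs, abs_of_pos hd1pos, ← hd1,
      inv_mul_cancel₀ (ne_of_gt hd1pos)]
  have hp10 : p1 - p0 = d0 • (pdot0 - Uc) := by
    rw [hu0, smul_smul, mul_inv_cancel₀ h0ne, one_smul]
  have key : ddot = (inner ℝ (pdot1 - Uc) (pdot0 - Uc) : ℝ) - 1 := by
    rw [hddot, hdiff, hp10, inner_smul_right, inner_sub_left,
      real_inner_self_eq_norm_sq, hn0]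
    field_simp
  refine ⟨key, ?_⟩
  rw [key]
  have := real_inner_le_norm (pdot1 - Uc) (pdot0 - Uc)
  rw [hn0, hn1] at this
  linarith
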